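/- Sufficiency in the characterization of HTOs of complete erasures, equality case (Theorem 2, case (ii)): let A be a finite nonempty type, b > 0, Q : Matrix A A ℂ Hermitian, and ρ0 a positive definite density matrix on A. Suppose -Real.log ((Matrix.trace (exp (-b • Q))).re) = -S(ρ0) and the density matrix σ = (tr (exp (-b • Q)))⁻¹ • exp (-b • Q) has the same characteristic polynomial as ρ0. Then there exist a Hermitian matrix H_B : Matrix A A ℂ (the bath is a copy of A) and a matrix U : Matrix (A × A) (A × A) ℂ with Uᴴ * U = 1 such that, with ρ_B the Gibbs state of H_B at inverse temperature b: (a) for every density matrix ρ on A, tr_B (U * (ρ ⊗ₖ ρ_B) * Uᴴ) = ρ0; and (b) the heat transfer operator of this realization setup equals Q. -/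

import Mathlib

open Matrix Kronecker
open scoped ComplexOrder

noncomputable section

/-- A density matrix: positive semidefinite with trace 1. -/
def IsDensityMatrix {ι : Type*} [Fintype ι] (ρ : Matrix ι ι ℂ) : Prop :=
  ρ.PosSemidef ∧ ρ.trace = 1

/-- The matrix exponential. -/
noncomputable def mexp {ι : Type*} [Fintype ι] [DecidableEq ι] (M : Matrix ι ι ℂ) :
    Matrix ι ι ℂ :=
  NormedSpace.exp M

/-- Von Neumann entropy of a (Hermitian) matrix, via its eigenvalues. -/
noncomputable def vnEntropy {ι : Type*} [Fintype ι] [DecidableEq ι] (ρ : Matrix ι ι ℂ) : ℝ :=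
  if h : ρ.IsHermitian then -∑ i, h.eigenvalues i * Real.log (h.eigenvalues i) else 0

/-- The Gibbs state of the Hamiltonian `H` at inverse temperature `b`. -/
noncomputable def gibbs {ι : Type*} [Fintype ι] [DecidableEq ι] (H : Matrix ι ι ℂ) (b : ℝ) :
    Matrix ι ι ℂ :=
  (Matrix.trace (mexp (-b • H)))⁻¹ • mexp (-b • H)

/-- Equilibrium energy of the bath. -/
noncomputable def eqEnergy {ι : Type*} [Fintype ι] [DecidableEq ι] (H : Matrix ι ι ℂ) (b : ℝ) : ℝ :=
  (Matrix.trace (gibbs H b * H)).re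

/-- Partial trace over the second (bath) factor. -/
def ptraceB {A B : Type*} [Fintype B] (M : Matrix (A × B) (A × B) ℂ) : Matrix A A ℂ :=
  Matrix.of fun a a' => ∑ k : B, M (a, k) (a', k)

/-- Partial trace over the first (device) factor. -/
def ptraceA {A B : Type*} [Fintype A] (M : Matrix (A × B) (A × B) ℂ) : Matrix B B ℂ :=
  Matrix.of fun k k' => ∑ a : A, M (a, k) (a, k')

/-- The heat transfer operator of a realization setup. -/
noncomputable def hto {A B : Type*} [Fintype A] [DecidableEq A] [Fintype B] [DecidableEq B]
    (H_B : Matrix B B ℂ) (b : ℝ) (U : Matrix (A × B) (A × B) ℂ) : Matrix A A ℂ :=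
  ptraceB (((1 : Matrix A A ℂ) ⊗ₖ gibbs H_B b) * Uᴴ * ((1 : Matrix A A ℂ) ⊗ₖ H_B) * U)
    - eqEnergy H_B b • (1 : Matrix A A ℂ)

/-- Matrix logarithm of a Hermitian matrix through the continuous functional calculus. -/
noncomputable def mlog {ι : Type*} [Fintype ι] [DecidableEq ι] (ρ : Matrix ι ι ℂ) :
    Matrix ι ι ℂ :=
  if h : ρ.IsHermitian then h.cfc Real.log else 0

/-- Quantum relative entropy `S(σ‖ρ)`. -/
noncomputable def relEntropy {ι : Type*} [Fintype ι] [DecidableEq ι] (σ ρ : Matrix ι ι ℂ) : ℝ :=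
  (Matrix.trace (σ * (mlog σ - mlog ρ))).re

end


section AuxLemmas
open Polynomial

/-- Existence of a permutation matching two functions with equal value multisets. -/
theorem aux_exists_perm {α β : Type*} [Fintype α] [DecidableEq α] {f g : α → β}
    (h : Multiset.map f Finset.univ.val = Multiset.map g Finset.univ.val) :
    ∃ e : Equiv.Perm α, ∀ a, f (e a) = g a := by
  classical
  have hcard : ∀ b : β, Fintype.card {a // g a = b} = Fintype.card {a // f a = b} := by
    intro b
    rw [Fintype.card_subtype, Fintype.card_subtype]
    have := congrArg (Multiset.count b) h
    rw [Multiset.count_map, Multiset.count_map, ← Finset.filter_val, ← Finset.filter_val,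
      ← Finset.card_def, ← Finset.card_def] at this
    simpa [eq_comm] using this.symm
  refine ⟨(Equiv.sigmaFiberEquiv g).symm.trans
    ((Equiv.sigmaCongrRight fun b => Fintype.equivOfCardEq (hcard b)).trans
      (Equiv.sigmaFiberEquiv f)), fun a => ?_⟩
  exact ((Equiv.sigmaCongrRight fun b => Fintype.equivOfCardEq (hcard b))
    ((Equiv.sigmaFiberEquiv g).symm a)).2.2

theorem aux_charpoly_diagonal {n : Type*} [Fintype n] [DecidableEq n]
    (d : n → ℂ) : (Matrix.diagonal d).charpoly = ∏ i, (X - C (d i)) := by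
  have : charmatrix (Matrix.diagonal d) = Matrix.diagonal fun i => (X : ℂ[X]) - C (d i) := by
    ext i j
    by_cases hij : i = j
    · subst hij; simp [charmatrix_apply_eq]
    · simp [charmatrix_apply_ne _ _ _ hij, Matrix.diagonal_apply_ne _ hij]
  rw [Matrix.charpoly, this, Matrix.det_diagonal]

theorem aux_charpoly_conj {n : Type*} [Fintype n] [DecidableEq n]
    (W M : Matrix n n ℂ) (h1 : Wᴴ * W = 1) (h2 : W * Wᴴ = 1) :
    (W * M * Wᴴ).charpoly = M.charpoly := by
  have hmap : ∀ (P R : Matrix n n ℂ), (P * R).map (C : ℂ →+* ℂ[X]) = P.map C * R.map C :=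
    fun P R => Matrix.map_mul
  have hchar : charmatrix (W * M * Wᴴ) = W.map C * charmatrix M * Wᴴ.map C := by
    unfold charmatrix
    simp only [RingHom.mapMatrix_apply]
    rw [Matrix.mul_sub, Matrix.sub_mul, hmap, hmap]
    congr 1
    have : (Matrix.scalar n (X : ℂ[X])) * Wᴴ.map C = Wᴴ.map C * Matrix.scalar n X :=
      (Matrix.scalar_commute (X : ℂ[X]) (fun r' => mul_comm _ _) (Wᴴ.map C)).eq
    rw [mul_assoc, this, ← mul_assoc, ← hmap, h2, Matrix.map_one C (map_zero C) (map_one C),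
      one_mul]
  rw [Matrix.charpoly, Matrix.charpoly, hchar, Matrix.det_mul, Matrix.det_mul,
    mul_comm, ← mul_assoc, ← Matrix.det_mul, ← hmap, h1,
    Matrix.map_one C (map_zero C) (map_one C), Matrix.det_one, one_mul]

variable {A : Type*} [Fintype A] [DecidableEq A]

/-- The swap matrix on `A × A`. -/
noncomputable def swapM (A : Type*) [Fintype A] [DecidableEq A] : Matrix (A × A) (A × A) ℂ :=
  (1 : Matrix (A × A) (A × A) ℂ).submatrix (⇑(Equiv.prodComm A A)) id

theorem swapM_eq :
    swapM A = (1 : Matrix (A × A) (A × A) ℂ).submatrix id (⇑(Equiv.prodComm A A)) := by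
  ext p q
  simp only [swapM, Matrix.submatrix_apply, id_eq, Matrix.one_apply, Equiv.prodComm_apply]
  by_cases h : p.swap = q
  · subst h; simp
  · have h' : ¬ p = q.swap := by intro hh; exact h (by simp [hh])
    simp [h, h']

theorem one_submatrix_mul_left (e : Equiv.Perm A) (M : Matrix A A ℂ) :
    (1 : Matrix A A ℂ).submatrix (⇑e) id * M = M.submatrix (⇑e) id := by
  have := Matrix.submatrix_mul_equiv (1 : Matrix A A ℂ) M (⇑e) (Equiv.refl A) id
  simpa using this

theorem mul_one_submatrix_right (e : Equiv.Perm A) (M : Matrix A A ℂ) :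
    M * (1 : Matrix A A ℂ).submatrix id (⇑e) = M.submatrix id (⇑e) := by
  have := Matrix.submatrix_mul_equiv M (1 : Matrix A A ℂ) id (Equiv.refl A) (⇑e)
  simpa using this

theorem swapM_mul_swapM : swapM A * swapM A = 1 := by
  nth_rewrite 1 [swapM_eq]
  rw [swapM, Matrix.submatrix_mul_equiv (1 : Matrix (A × A) (A × A) ℂ) 1 id
    (Equiv.prodComm A A) id]
  simp

theorem swapM_conjTranspose : (swapM A)ᴴ = swapM A := by
  conv_lhs => rw [swapM]
  rw [ Matrix.conjTranspose_submatrix, Matrix.conjTranspose_one, ← swapM_eq]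

theorem kron_submatrix_swap (M N : Matrix A A ℂ) :
    M ⊗ₖ N = (N ⊗ₖ M).submatrix (⇑(Equiv.prodComm A A)) (⇑(Equiv.prodComm A A)) := by
  ext p q
  simp [Matrix.kroneckerMap_apply, mul_comm]

theorem swapM_mul_kron (M N : Matrix A A ℂ) :
    swapM A * (M ⊗ₖ N) = (N ⊗ₖ M) * swapM A := by
  have h1 : swapM A * (M ⊗ₖ N) = (N ⊗ₖ M).submatrix id (⇑(Equiv.prodComm A A)) := by
    rw [swapM_eq, kron_submatrix_swap M N,
      Matrix.submatrix_mul_equiv (1 : Matrix (A × A) (A × A) ℂ) (N ⊗ₖ M) id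
        (Equiv.prodComm A A) (⇑(Equiv.prodComm A A)), one_mul]
  have h3 : (N ⊗ₖ M)
      = ((N ⊗ₖ M).submatrix id (⇑(Equiv.prodComm A A))).submatrix id (⇑(Equiv.prodComm A A)) := by
    ext p q; simp
  have h2 : (N ⊗ₖ M) * swapM A = (N ⊗ₖ M).submatrix id (⇑(Equiv.prodComm A A)) := by
    rw [swapM]
    nth_rewrite 1 [h3]
    rw [Matrix.submatrix_mul_equiv ((N ⊗ₖ M).submatrix id (⇑(Equiv.prodComm A A)))
      (1 : Matrix (A × A) (A × A) ℂ) id (Equiv.prodComm A A) id, mul_one]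
    simp
  rw [h1, h2]

theorem swap_conj_kron (M N : Matrix A A ℂ) :
    swapM A * (M ⊗ₖ N) * swapM A = N ⊗ₖ M := by
  rw [swapM_mul_kron, mul_assoc, swapM_mul_swapM, mul_one]

theorem kron_conjTranspose (M N : Matrix A A ℂ) : (M ⊗ₖ N)ᴴ = Mᴴ ⊗ₖ Nᴴ := by
  ext p q
  simp [Matrix.conjTranspose_apply, Matrix.kroneckerMap_apply]

theorem ptraceB_kron {B : Type*} [Fintype B] (M : Matrix A A ℂ) (N : Matrix B B ℂ) :
    ptraceB (M ⊗ₖ N) = N.trace • M := by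
  ext a a'
  simp [ptraceB, Matrix.trace, Matrix.diag, ← Finset.mul_sum, mul_comm]

theorem sandwich_mul (W : Matrix A A ℂ) (h : Wᴴ * W = 1) (M N : Matrix A A ℂ) :
    (W * M * Wᴴ) * (W * N * Wᴴ) = W * (M * N) * Wᴴ := by
  simp only [mul_assoc]
  rw [← mul_assoc Wᴴ W, h, one_mul]

end AuxLemmas

/-- Sufficiency in the characterization of HTOs of complete erasures,
equality case (Theorem 2, case (ii)). -/
theorem complete_erasure_sufficiency_equality_case
    {A : Type*} [Fintype A] [DecidableEq A] [Nonempty A]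
    {b : ℝ} (hb : 0 < b)
    (Q : Matrix A A ℂ) (hQ : Q.IsHermitian)
    (ρ0 : Matrix A A ℂ) (hρ0 : IsDensityMatrix ρ0) (hρ0pd : ρ0.PosDef)
    (hJ : -Real.log ((Matrix.trace (mexp (-b • Q))).re) = -vnEntropy ρ0)
    (hiso : ((Matrix.trace (mexp (-b • Q)))⁻¹ • mexp (-b • Q)).charpoly = ρ0.charpoly) :
    ∃ (H_B : Matrix A A ℂ) (U : Matrix (A × A) (A × A) ℂ),
      H_B.IsHermitian ∧ Uᴴ * U = 1 ∧
      (∀ ρ : Matrix A A ℂ, IsDensityMatrix ρ →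
        ptraceB (U * (ρ ⊗ₖ gibbs H_B b) * Uᴴ) = ρ0) ∧
      hto H_B b U = Q := by
  classical
  -- spectral data of Q
  set lam := hQ.eigenvalues with hlam
  set W : Matrix A A ℂ := (hQ.eigenvectorUnitary : Matrix A A ℂ) with hWdef
  have hW1 : Wᴴ * W = 1 := by
    have := (hQ.eigenvectorUnitary).2
    rw [Matrix.mem_unitaryGroup_iff'] at this
    simpa [Matrix.star_eq_conjTranspose] using this
  have hW2 : W * Wᴴ = 1 := by
    have := (hQ.eigenvectorUnitary).2
    rw [Matrix.mem_unitaryGroup_iff] at this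
    simpa [Matrix.star_eq_conjTranspose] using this
  have hspec : Q = W * Matrix.diagonal (fun i => (lam i : ℂ)) * Wᴴ := by
    have := hQ.spectral_theorem
    exact this
  have hWu : IsUnit W := ⟨⟨W, Wᴴ, hW2, hW1⟩, rfl⟩
  have hWinv : W⁻¹ = Wᴴ := Matrix.inv_eq_right_inv hW2
  -- exponential
  have hexp : mexp (-b • Q) = W * Matrix.diagonal (fun i => (Real.exp (-b * lam i) : ℂ)) * Wᴴ := by
    have h1 : -b • Q = W * Matrix.diagonal (fun i => ((-b * lam i : ℝ) : ℂ)) * W⁻¹ := by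
      rw [hWinv, hspec, ← smul_mul_assoc, ← mul_smul_comm]
      congr 2
      have : (-b) • Matrix.diagonal (fun i => ((lam i : ℝ) : ℂ))
          = Matrix.diagonal ((-b) • fun i => ((lam i : ℝ) : ℂ)) := by
        rw [Matrix.diagonal_smul]
      rw [this]
      refine congrArg Matrix.diagonal (funext fun i => ?_)
      rw [Pi.smul_apply]
      push_cast [Complex.real_smul]
      ring
    have h4 : (NormedSpace.exp fun i => ((-b * lam i : ℝ) : ℂ))
        = fun i => ((Real.exp (-b * lam i) : ℝ) : ℂ) := by
      funext i
      rw [Pi.coe_exp, ← Complex.exp_eq_exp_ℂ, ← Complex.ofReal_exp]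
    rw [mexp, h1, Matrix.exp_conj W _ hWu, Matrix.exp_diagonal, hWinv, h4]
  set Z : ℝ := ∑ i, Real.exp (-b * lam i) with hZ
  have hZpos : 0 < Z := Finset.sum_pos (fun i _ => Real.exp_pos _) Finset.univ_nonempty
  have htrconj : ∀ v : A → ℂ, Matrix.trace (W * Matrix.diagonal v * Wᴴ) = ∑ i, v i := by
    intro v
    rw [Matrix.trace_mul_cycle, hW1, one_mul, Matrix.trace_diagonal]
  have htr : Matrix.trace (mexp (-b • Q)) = (Z : ℂ) := by
    rw [hexp, htrconj, hZ]
    push_cast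
    rfl
  set μ : A → ℝ := fun i => Z⁻¹ * Real.exp (-b * lam i) with hμ
  have hμpos : ∀ i, 0 < μ i := fun i => mul_pos (inv_pos.mpr hZpos) (Real.exp_pos _)
  have hμsum : ∑ i, μ i = 1 := by
    rw [hμ, ← Finset.mul_sum, ← hZ, inv_mul_cancel₀ (ne_of_gt hZpos)]
  have hgibbs : gibbs Q b = W * Matrix.diagonal (fun i => (μ i : ℂ)) * Wᴴ := by
    have hD : ((Z : ℝ) : ℂ)⁻¹ • Matrix.diagonal (fun i => ((Real.exp (-b * lam i) : ℝ) : ℂ))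
        = Matrix.diagonal (fun i => ((μ i : ℝ) : ℂ)) := by
      rw [← Matrix.diagonal_smul]
      refine congrArg Matrix.diagonal (funext fun i => ?_)
      rw [Pi.smul_apply, smul_eq_mul, hμ]
      push_cast
      ring
    rw [gibbs, htr, hexp, ← smul_mul_assoc, ← mul_smul_comm, hD]
  -- spectral data of ρ0
  have hρh : ρ0.IsHermitian := hρ0pd.isHermitian
  set nu := hρh.eigenvalues with hnu
  set W0 : Matrix A A ℂ := (hρh.eigenvectorUnitary : Matrix A A ℂ) with hW0def
  have hW01 : W0ᴴ * W0 = 1 := by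
    have := (hρh.eigenvectorUnitary).2
    rw [Matrix.mem_unitaryGroup_iff'] at this
    simpa [Matrix.star_eq_conjTranspose] using this
  have hW02 : W0 * W0ᴴ = 1 := by
    have := (hρh.eigenvectorUnitary).2
    rw [Matrix.mem_unitaryGroup_iff] at this
    simpa [Matrix.star_eq_conjTranspose] using this
  have hρspec : ρ0 = W0 * Matrix.diagonal (fun i => (nu i : ℂ)) * W0ᴴ := by
    have := hρh.spectral_theorem
    exact this
  -- matching eigenvalues
  open Polynomial in
  have hms : Multiset.map μ Finset.univ.val = Multiset.map nu Finset.univ.val := by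
    have h1 : (gibbs Q b).charpoly = ρ0.charpoly := hiso
    rw [hgibbs, aux_charpoly_conj _ _ hW1 hW2, aux_charpoly_diagonal] at h1
    conv_rhs at h1 => rw [hρspec, aux_charpoly_conj _ _ hW01 hW02, aux_charpoly_diagonal]
    have h2 := congrArg Polynomial.roots h1
    rw [Finset.prod_eq_multiset_prod, Finset.prod_eq_multiset_prod,
      show (Multiset.map (fun i => (X : ℂ[X]) - C ((μ i : ℂ))) Finset.univ.val)
        = (Multiset.map (fun i => ((μ i : ℝ) : ℂ)) Finset.univ.val).map (fun a => X - C a) by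
          rw [Multiset.map_map]; rfl,
      show (Multiset.map (fun i => (X : ℂ[X]) - C ((nu i : ℂ))) Finset.univ.val)
        = (Multiset.map (fun i => ((nu i : ℝ) : ℂ)) Finset.univ.val).map (fun a => X - C a) by
          rw [Multiset.map_map]; rfl,
      Polynomial.roots_multiset_prod_X_sub_C, Polynomial.roots_multiset_prod_X_sub_C] at h2
    have h3 : Multiset.map (Complex.ofReal) (Multiset.map μ Finset.univ.val)
        = Multiset.map (Complex.ofReal) (Multiset.map nu Finset.univ.val) := by
      rw [Multiset.map_map, Multiset.map_map]
      exact h2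
    exact Multiset.map_injective Complex.ofReal_injective h3
  obtain ⟨e, he⟩ := aux_exists_perm hms
  -- the key trace identity
  have hvn : vnEntropy ρ0 = -∑ i, nu i * Real.log (nu i) := by
    rw [vnEntropy, dif_pos hρh]
  have hlog : ∀ i, Real.log (μ i) = -Real.log Z + (-b * lam i) := by
    intro i
    rw [hμ]
    rw [Real.log_mul (inv_ne_zero hZpos.ne') (Real.exp_pos _).ne', Real.log_inv, Real.log_exp]
  have hsum2 : ∑ i, nu i * Real.log (nu i) = ∑ i, μ i * Real.log (μ i) := by
    exact Fintype.sum_equiv e _ _ (fun i => by rw [he])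
  have hsum1 : ∑ i, μ i * Real.log (μ i) = -Real.log Z - b * ∑ i, μ i * lam i := by
    have : ∀ i, μ i * Real.log (μ i) = -Real.log Z * μ i + (-b) * (μ i * lam i) := by
      intro i
      rw [hlog i]
      ring
    rw [Finset.sum_congr rfl (fun i _ => this i), Finset.sum_add_distrib,
      show ∑ i, -Real.log Z * μ i = -Real.log Z * ∑ i, μ i from (Finset.mul_sum _ _ _).symm,
      show ∑ i, (-b) * (μ i * lam i) = (-b) * ∑ i, (μ i * lam i) from
        (Finset.mul_sum _ _ _).symm, hμsum]
    ring
  have hZre : (Matrix.trace (mexp (-b • Q))).re = Z := by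
    rw [htr, Complex.ofReal_re]
  have hkey : ∑ i, μ i * lam i = 0 := by
    rw [hZre, hvn] at hJ
    rw [hsum2, hsum1] at hJ
    have hb' : b ≠ 0 := ne_of_gt hb
    nlinarith [hJ]
  -- equilibrium energy is zero
  have htrQ : Matrix.trace (gibbs Q b * Q) = ((∑ i, μ i * lam i : ℝ) : ℂ) := by
    conv_lhs => rw [hgibbs]
    conv_lhs => rw [show Q = W * Matrix.diagonal (fun i => (lam i : ℂ)) * Wᴴ from hspec]
    rw [sandwich_mul W hW1, Matrix.diagonal_mul_diagonal, htrconj]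
    push_cast
    rfl
  have hE : eqEnergy Q b = 0 := by
    rw [eqEnergy, htrQ, hkey]
    simp
  have htrg : Matrix.trace (gibbs Q b) = 1 := by
    rw [hgibbs, htrconj]
    exact_mod_cast hμsum
  -- permutation matrix
  set P : Matrix A A ℂ := (1 : Matrix A A ℂ).submatrix (⇑e) id with hP
  have hPH : Pᴴ = (1 : Matrix A A ℂ).submatrix id (⇑e) := by
    rw [hP, Matrix.conjTranspose_submatrix, Matrix.conjTranspose_one]
  have hPdiag : P * Matrix.diagonal (fun i => (μ i : ℂ)) * Pᴴ
      = Matrix.diagonal (fun i => (nu i : ℂ)) := by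
    rw [hP, hPH, one_submatrix_mul_left, mul_one_submatrix_right,
      Matrix.submatrix_submatrix]
    rw [show ((⇑e) ∘ id) = ⇑e from rfl, show (id ∘ ⇑e) = ⇑e from rfl]
    rw [Matrix.submatrix_diagonal_equiv]
    refine congrArg Matrix.diagonal (funext fun i => ?_)
    rw [Function.comp_apply, he]
  have hPuni1 : Pᴴ * P = 1 := by
    rw [hP, hPH, Matrix.submatrix_mul_equiv (1 : Matrix A A ℂ) 1 id e id]
    simp
  have hPuni2 : P * Pᴴ = 1 := by
    rw [hP, hPH, one_submatrix_mul_left, Matrix.submatrix_submatrix]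
    rw [show (id ∘ ⇑e) = ⇑e from rfl, show ((⇑e) ∘ id) = ⇑e from rfl]
    exact Matrix.submatrix_one_equiv e
  -- the unitary V with V σ Vᴴ = ρ0
  set V : Matrix A A ℂ := W0 * P * Wᴴ with hV
  have hVH : Vᴴ = W * Pᴴ * W0ᴴ := by
    rw [hV, Matrix.conjTranspose_mul, Matrix.conjTranspose_mul,
      Matrix.conjTranspose_conjTranspose, mul_assoc]
  have hV1 : Vᴴ * V = 1 := by
    rw [hVH, hV]
    calc W * Pᴴ * W0ᴴ * (W0 * P * Wᴴ)
        = W * (Pᴴ * ((W0ᴴ * W0) * P)) * Wᴴ := by simp only [mul_assoc]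
      _ = 1 := by rw [hW01, one_mul, hPuni1, mul_one, hW2]
  have hVσ : V * gibbs Q b * Vᴴ = ρ0 := by
    rw [hVH, hV, hgibbs]
    calc W0 * P * Wᴴ * (W * Matrix.diagonal (fun i => (μ i : ℂ)) * Wᴴ) * (W * Pᴴ * W0ᴴ)
        = W0 * (P * ((Wᴴ * W) * (Matrix.diagonal (fun i => (μ i : ℂ))
            * ((Wᴴ * W) * Pᴴ)))) * W0ᴴ := by simp only [mul_assoc]
      _ = W0 * (P * Matrix.diagonal (fun i => (μ i : ℂ)) * Pᴴ) * W0ᴴ := by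
          rw [hW1, one_mul, one_mul]; simp only [mul_assoc]
      _ = ρ0 := by rw [hPdiag, ← hρspec]
  -- the global unitary U
  set U : Matrix (A × A) (A × A) ℂ := (V ⊗ₖ (1 : Matrix A A ℂ)) * swapM A with hU
  have hUH : Uᴴ = swapM A * (Vᴴ ⊗ₖ (1 : Matrix A A ℂ)) := by
    rw [hU, Matrix.conjTranspose_mul, swapM_conjTranspose, kron_conjTranspose,
      Matrix.conjTranspose_one]
  have hUU : Uᴴ * U = 1 := by
    rw [hUH, hU]
    calc swapM A * (Vᴴ ⊗ₖ (1 : Matrix A A ℂ)) * ((V ⊗ₖ (1 : Matrix A A ℂ)) * swapM A)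
        = swapM A * ((Vᴴ ⊗ₖ (1 : Matrix A A ℂ)) * (V ⊗ₖ (1 : Matrix A A ℂ))) * swapM A := by
          simp only [mul_assoc]
      _ = swapM A * swapM A := by
          rw [← Matrix.mul_kronecker_mul, hV1, one_mul, Matrix.one_kronecker_one, mul_one]
      _ = 1 := swapM_mul_swapM
  refine ⟨Q, U, hQ, hUU, ?_, ?_⟩
  · intro ρ hρ
    have h1 : U * (ρ ⊗ₖ gibbs Q b) * Uᴴ = ρ0 ⊗ₖ ρ := by
      rw [hUH, hU]
      calc (V ⊗ₖ (1 : Matrix A A ℂ)) * swapM A * (ρ ⊗ₖ gibbs Q b)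
            * (swapM A * (Vᴴ ⊗ₖ (1 : Matrix A A ℂ)))
          = (V ⊗ₖ (1 : Matrix A A ℂ)) * (swapM A * (ρ ⊗ₖ gibbs Q b) * swapM A)
            * (Vᴴ ⊗ₖ (1 : Matrix A A ℂ)) := by simp only [mul_assoc]
        _ = (V ⊗ₖ (1 : Matrix A A ℂ)) * (gibbs Q b ⊗ₖ ρ) * (Vᴴ ⊗ₖ (1 : Matrix A A ℂ)) := by
            rw [swap_conj_kron]
        _ = (V * gibbs Q b * Vᴴ) ⊗ₖ ((1 : Matrix A A ℂ) * ρ * (1 : Matrix A A ℂ)) := by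
            rw [← Matrix.mul_kronecker_mul, ← Matrix.mul_kronecker_mul]
        _ = ρ0 ⊗ₖ ρ := by rw [hVσ, one_mul, mul_one]
    rw [h1, ptraceB_kron, hρ.2, one_smul]
  · rw [hto]
    have h2 : ((1 : Matrix A A ℂ) ⊗ₖ gibbs Q b) * Uᴴ * ((1 : Matrix A A ℂ) ⊗ₖ Q) * U
        = Q ⊗ₖ gibbs Q b := by
      rw [hUH, hU]
      calc ((1 : Matrix A A ℂ) ⊗ₖ gibbs Q b) * (swapM A * (Vᴴ ⊗ₖ (1 : Matrix A A ℂ)))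
            * ((1 : Matrix A A ℂ) ⊗ₖ Q) * ((V ⊗ₖ (1 : Matrix A A ℂ)) * swapM A)
          = ((1 : Matrix A A ℂ) ⊗ₖ gibbs Q b) * (swapM A
              * ((Vᴴ ⊗ₖ (1 : Matrix A A ℂ)) * (((1 : Matrix A A ℂ) ⊗ₖ Q)
              * (V ⊗ₖ (1 : Matrix A A ℂ)))) * swapM A) := by simp only [mul_assoc]
        _ = ((1 : Matrix A A ℂ) ⊗ₖ gibbs Q b) * (swapM A
              * ((1 : Matrix A A ℂ) ⊗ₖ Q) * swapM A) := by
            rw [show ((1 : Matrix A A ℂ) ⊗ₖ Q) * (V ⊗ₖ (1 : Matrix A A ℂ))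
                = V ⊗ₖ Q by rw [← Matrix.mul_kronecker_mul, one_mul, mul_one],
              show (Vᴴ ⊗ₖ (1 : Matrix A A ℂ)) * (V ⊗ₖ Q)
                = (1 : Matrix A A ℂ) ⊗ₖ Q by rw [← Matrix.mul_kronecker_mul, hV1, one_mul],
              mul_assoc]
        _ = ((1 : Matrix A A ℂ) ⊗ₖ gibbs Q b) * (Q ⊗ₖ (1 : Matrix A A ℂ)) := by
            rw [swap_conj_kron]
        _ = Q ⊗ₖ gibbs Q b := by
            rw [← Matrix.mul_kronecker_mul, one_mul, mul_one]
    rw [h2, ptraceB_kron, htrg, one_smul, hE]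
    simp
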